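/- Let X be an order complete vector lattice that is universally complete (in particular, X has a weak unit and arbitrary suprema of disjoint positive families exist). If A ⊆ X₊ is uo-bounded, meaning that the net ((1/n)·a)_{(n,a) ∈ ℕ×A} (ordered by first coordinate) converges to 0 in unbounded order convergence, then A is order bounded: there exists h ∈ X₊ with a ≤ h for all a ∈ A. -/

import Mathlib

open Filter Pointwise

/-- A net convergence structure on `X`: assigns, for every directed preordered
index type, which nets converge to which points. -/
abbrev Conv (X : Type) : Type 1 :=
  ∀ (ι : Type) [Preorder ι] [IsDirected ι (· ≤ ·)] [Nonempty ι], (ι → X) → X → Prop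

/-- `y` is a quasi-subnet of `x`: every tail set of `x` contains a tail set of `y`. -/
def IsQuasiSubnet {X : Type} {ι κ : Type} [Preorder ι] [Preorder κ]
    (y : κ → X) (x : ι → X) : Prop :=
  ∀ i₀ : ι, ∃ k₀ : κ, ∀ k, k₀ ≤ k → ∃ i, i₀ ≤ i ∧ y k = x i

/-- The axioms of a (net) convergence structure. -/
structure IsConvStruct {X : Type} (C : Conv X) : Prop where
  const : ∀ (ι : Type) [Preorder ι] [IsDirected ι (· ≤ ·)] [Nonempty ι] (a : X),
    C ι (fun _ => a) a
  quasi : ∀ (ι κ : Type) [Preorder ι] [IsDirected ι (· ≤ ·)] [Nonempty ι]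
      [Preorder κ] [IsDirected κ (· ≤ ·)] [Nonempty κ]
      (x : ι → X) (y : κ → X) (a : X),
    C ι x a → IsQuasiSubnet y x → C κ y a
  mix : ∀ (ι : Type) [Preorder ι] [IsDirected ι (· ≤ ·)] [Nonempty ι]
      (x y z : ι → X) (a : X),
    C ι x a → C ι y a → (∀ i, z i = x i ∨ z i = y i) → C ι z a

/-- A linear convergence structure: a convergence structure for which the vector
space operations are continuous. -/
structure IsLinearConv {X : Type} [AddCommGroup X] [Module ℝ X] (C : Conv X)
    extends IsConvStruct C : Prop where
  add : ∀ (ι : Type) [Preorder ι] [IsDirected ι (· ≤ ·)] [Nonempty ι]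
      (x y : ι → X) (a b : X),
    C ι x a → C ι y b → C ι (fun i => x i + y i) (a + b)
  smul : ∀ (ι : Type) [Preorder ι] [IsDirected ι (· ≤ ·)] [Nonempty ι]
      (r : ι → ℝ) (x : ι → X) (r₀ : ℝ) (a : X),
    Tendsto r atTop (nhds r₀) → C ι x a → C ι (fun i => r i • x i) (r₀ • a)

/-- Local solidity of a convergence structure on a vector lattice. -/
def LocSolid {X : Type} [AddCommGroup X] [Lattice X] (C : Conv X) : Prop :=
  ∀ (ι : Type) [Preorder ι] [IsDirected ι (· ≤ ·)] [Nonempty ι]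
    (x y : ι → X), (∀ i, |y i| ≤ |x i|) → C ι x 0 → C ι y 0

/-- A convergence structure is Hausdorff when limits are unique. -/
def ConvHausdorff {X : Type} (C : Conv X) : Prop :=
  ∀ (ι : Type) [Preorder ι] [IsDirected ι (· ≤ ·)] [Nonempty ι]
    (x : ι → X) (a b : X), C ι x a → C ι x b → a = b

/-- A product ordered by the first coordinate. -/
def FstOrd (Γ A : Type) : Type := Γ × A

instance FstOrd.pre (Γ A : Type) [Preorder Γ] : Preorder (FstOrd Γ A) :=
  Preorder.lift (fun p : Γ × A => p.1)

instance FstOrd.dir (Γ A : Type) [Preorder Γ] [IsDirected Γ (· ≤ ·)] :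
    IsDirected (FstOrd Γ A) (· ≤ ·) :=
  ⟨fun p q => by
    obtain ⟨c, hc1, hc2⟩ := directed_of (· ≤ · : Γ → Γ → Prop) (Prod.fst p) (Prod.fst q)
    exact ⟨(c, Prod.snd p), hc1, hc2⟩⟩

instance FstOrd.nonempty (Γ A : Type) [Nonempty Γ] [Nonempty A] : Nonempty (FstOrd Γ A) :=
  inferInstanceAs (Nonempty (Γ × A))

/-- Order convergence of a net to `0`: eventual domination by a net decreasing to `0`. -/
def OConvZero {X : Type} [Lattice X] [AddCommGroup X] {ι : Type} [Preorder ι]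
    (z : ι → X) : Prop :=
  ∃ (κ : Type) (_ : Preorder κ) (_ : IsDirected κ (· ≤ ·)) (_ : Nonempty κ)
    (u : κ → X), Antitone u ∧ IsGLB (Set.range u) 0 ∧
      ∀ k, ∃ i₀, ∀ i, i₀ ≤ i → |z i| ≤ u k



section ULHelpers
variable {X : Type} [ConditionallyCompleteLattice X] [AddCommGroup X]
    [CovariantClass X X (· + ·) (· ≤ ·)] [Module ℝ X] [PosSMulMono ℝ X]

set_option linter.unusedSectionVars false

lemma mySm {c : ℝ} (hc : 0 ≤ c) {x y : X} (h : x ≤ y) : c • x ≤ c • y :=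
  smul_le_smul_of_nonneg_left h hc

lemma mySmnn {c : ℝ} (hc : 0 ≤ c) {x : X} (hx : 0 ≤ x) : 0 ≤ c • x := by
  have := mySm hc hx; rwa [smul_zero] at this

lemma myScaleLe {c C : ℝ} (h : c ≤ C) {x : X} (hx : 0 ≤ x) : c • x ≤ C • x := by
  have h2 := mySmnn (sub_nonneg.2 h) hx
  rw [sub_smul] at h2
  exact sub_nonneg.1 h2

lemma myLeSmul {c : ℝ} (hc : 1 ≤ c) {x : X} (hx : 0 ≤ x) : x ≤ c • x := by
  have := myScaleLe hc hx; rwa [one_smul] at this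

lemma mySmulInf {c : ℝ} (hc : 0 < c) (x y : X) : c • (x ⊓ y) = c • x ⊓ c • y := by
  apply le_antisymm
  · exact le_inf (mySm hc.le inf_le_left) (mySm hc.le inf_le_right)
  · have h : c⁻¹ • (c • x ⊓ c • y) ≤ x ⊓ y := by
      refine le_inf ?_ ?_
      · have := mySm (inv_nonneg.2 hc.le) (inf_le_left (a := c • x) (b := c • y))
        rwa [inv_smul_smul₀ hc.ne'] at this
      · have := mySm (inv_nonneg.2 hc.le) (inf_le_right (a := c • x) (b := c • y))
        rwa [inv_smul_smul₀ hc.ne'] at this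
    have := mySm hc.le h
    rwa [smul_inv_smul₀ hc.ne'] at this

lemma myScaleDisj {p q : X} (hp : 0 ≤ p) (hq : 0 ≤ q) (h : p ⊓ q = 0) {c : ℝ}
    (hc : 0 ≤ c) : (c • p) ⊓ q = 0 := by
  have hC0 : (0:ℝ) < max c 1 := lt_of_lt_of_le one_pos (le_max_right c 1)
  apply le_antisymm
  · calc c • p ⊓ q ≤ (max c 1) • p ⊓ (max c 1) • q :=
        inf_le_inf (myScaleLe (le_max_left c 1) hp) (myLeSmul (le_max_right c 1) hq)
      _ = (max c 1) • (p ⊓ q) := (mySmulInf hC0 p q).symm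
      _ = 0 := by rw [h, smul_zero]
  · exact le_inf (mySmnn hc hp) hq

lemma myInfAdd {x y z : X} (hx : 0 ≤ x) (hy : 0 ≤ y) (hz : 0 ≤ z) :
    x ⊓ (y + z) ≤ x ⊓ y + x ⊓ z := by
  rw [← sub_le_iff_le_add']
  have h1 : x ⊓ (y + z) - x ⊓ y = (x ⊓ (y + z) - x) ⊔ (x ⊓ (y + z) - y) := by
    rw [sub_eq_add_neg, neg_inf, add_sup, ← sub_eq_add_neg, ← sub_eq_add_neg]
  rw [h1]
  refine sup_le (le_trans (sub_nonpos.2 inf_le_left) (le_inf hx hz)) (le_inf ?_ ?_)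
  · exact sub_le_iff_le_add.2 (le_trans inf_le_left (le_add_of_nonneg_right hy))
  · exact sub_le_iff_le_add.2 (le_trans inf_le_right (by rw [add_comm]))

lemma myLubInf {S : Set X} {s : X} (hs : IsLUB S s) (v b : X)
    (hb : ∀ y ∈ S, v ⊓ y ≤ b) : v ⊓ s ≤ b := by
  have h1 : ∀ y ∈ S, y ≤ s ⊔ v + b - v := by
    intro y hy
    have h2 : v ⊓ y + (v ⊔ y) = v + y := inf_add_sup v y
    have h3 : v ⊔ y ≤ v ⊔ s := sup_le_sup_left (hs.1 hy) v
    have h4 : v + y ≤ b + (v ⊔ s) := by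
      calc v + y = v ⊓ y + (v ⊔ y) := h2.symm
        _ ≤ b + (v ⊔ s) := add_le_add (hb y hy) h3
    calc y = (v + y) - v := by abel
      _ ≤ (b + (v ⊔ s)) - v := sub_le_sub_right h4 v
      _ = s ⊔ v + b - v := by rw [sup_comm v s]; abel
  have h2 : s ≤ s ⊔ v + b - v := hs.2 h1
  have h3 : v ⊓ s + (v ⊔ s) = v + s := inf_add_sup v s
  calc v ⊓ s = (v + s) - (v ⊔ s) := by rw [← h3]; abel
    _ ≤ (v + (s ⊔ v + b - v)) - (v ⊔ s) := sub_le_sub_right (add_le_add_right h2 v) _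
    _ = b + (s ⊔ v) - (v ⊔ s) := by abel
    _ = b := by rw [sup_comm v s]; abel

lemma myArch {e g : X} (hg : 0 ≤ g) (H : ∀ m : ℕ, (m : ℝ) • g ≤ e) : g ≤ 0 := by
  set s := sSup (Set.range fun m : ℕ => (m : ℝ) • g) with hs
  have hbdd : BddAbove (Set.range fun m : ℕ => (m : ℝ) • g) :=
    ⟨e, by rintro y ⟨m, rfl⟩; exact H m⟩
  have hle : ∀ m : ℕ, (m : ℝ) • g ≤ s := fun m => le_csSup hbdd ⟨m, rfl⟩
  have key : ∀ m : ℕ, (m : ℝ) • g ≤ s - g := by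
    intro m
    have h0 := hle (m + 1)
    have h2 : ((m + 1 : ℕ) : ℝ) • g = (m : ℝ) • g + g := by
      push_cast; rw [add_smul, one_smul]
    rw [h2] at h0
    exact le_sub_iff_add_le.2 h0
  have h5 : s ≤ s - g :=
    csSup_le ⟨(0:ℝ) • g, ⟨0, by norm_num⟩⟩ (by rintro y ⟨m, rfl⟩; exact key m)
  rw [le_sub_iff_add_le] at h5
  exact (add_le_iff_nonpos_right _).1 h5

lemma myPosNeg (u : X) : (u ⊔ 0) ⊓ (-u ⊔ 0) = 0 := by
  have h1 : u ⊔ 0 = u + (-u ⊔ 0) := by rw [add_sup]; simp [sup_comm]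
  have h2 : -u ⊔ 0 = -(u ⊓ 0) := by rw [neg_inf, neg_zero]
  rw [h1, h2]
  calc (u + -(u ⊓ 0)) ⊓ -(u ⊓ 0) = (u + -(u ⊓ 0)) ⊓ (0 + -(u ⊓ 0)) := by rw [zero_add]
    _ = (u ⊓ 0) + -(u ⊓ 0) := by rw [← inf_add]
    _ = 0 := add_neg_cancel _

end ULHelpers

set_option maxHeartbeats 3000000 in
/-- In a universally complete (order complete, weak unit, suprema of disjoint
positive families exist) vector lattice, every uo-bounded subset of the
positive cone is order bounded. -/
theorem stmt15 {X : Type} [ConditionallyCompleteLattice X] [AddCommGroup X]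
    [CovariantClass X X (· + ·) (· ≤ ·)] [Module ℝ X] [PosSMulMono ℝ X]
    (hdisj : ∀ D : Set X, (∀ d ∈ D, 0 ≤ d) →
      (∀ d₁ ∈ D, ∀ d₂ ∈ D, d₁ ≠ d₂ → d₁ ⊓ d₂ = 0) → ∃ s : X, IsLUB D s)
    (e : X) (he : 0 < e) (hweak : ∀ x : X, 0 ≤ x → x ⊓ e = 0 → x = 0)
    (A : Set X) (hA : ∀ a ∈ A, 0 ≤ a)
    (huo : ∀ u : X, 0 ≤ u →
      OConvZero (fun p : FstOrd ℕ ↥A =>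
        |(((Prod.fst p : ℕ) : ℝ) + 1)⁻¹ • ((Prod.snd p : ↥A) : X)| ⊓ u)) :
    ∃ h : X, 0 ≤ h ∧ ∀ a ∈ A, a ≤ h := by
  classical
  rcases Set.eq_empty_or_nonempty A with hAe | ⟨a₀, ha₀⟩
  · exact ⟨0, le_rfl, by simp [hAe]⟩
  haveI : Nonempty (↥A) := ⟨⟨a₀, ha₀⟩⟩
  letI : DistribLattice X := AddCommGroup.toDistribLattice X
  have hcpos : ∀ n : ℕ, (0:ℝ) < (n:ℝ) + 1 := fun n => by positivity
  have hc1 : ∀ n : ℕ, (1:ℝ) ≤ (n:ℝ) + 1 := fun n => by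
    have : (0:ℝ) ≤ (n:ℝ) := Nat.cast_nonneg n
    linarith
  -- the net x n = sup_{a ∈ A} ((n+1)⁻¹ a ⊓ e)
  set S : ℕ → Set X := fun n => (fun a => ((n:ℝ)+1)⁻¹ • a ⊓ e) '' A with hSdef
  set x : ℕ → X := fun n => sSup (S n) with hxdef
  have hSb : ∀ n, BddAbove (S n) := fun n =>
    ⟨e, by rintro y ⟨a, ha, rfl⟩; exact inf_le_right⟩
  have hSne : ∀ n, (S n).Nonempty := fun n => ⟨_, ⟨a₀, ha₀, rfl⟩⟩
  have hmem : ∀ n : ℕ, ∀ a ∈ A, ((n:ℝ)+1)⁻¹ • a ⊓ e ≤ x n := fun n a ha =>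
    le_csSup (hSb n) ⟨a, ha, rfl⟩
  have hxle : ∀ n, x n ≤ e := fun n =>
    csSup_le (hSne n) (by rintro y ⟨a, ha, rfl⟩; exact inf_le_right)
  have hx0 : ∀ n, 0 ≤ x n := by
    intro n
    refine le_trans ?_ (hmem n a₀ ha₀)
    exact le_inf (mySmnn (by positivity) (hA a₀ ha₀)) he.le
  have hanti : ∀ {m n : ℕ}, m ≤ n → x n ≤ x m := by
    intro m n hmn
    refine csSup_le (hSne n) ?_
    rintro y ⟨a, ha, rfl⟩
    refine le_trans ?_ (hmem m a ha)
    refine inf_le_inf_right e ?_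
    have hsc : ((n:ℝ)+1)⁻¹ ≤ ((m:ℝ)+1)⁻¹ := by
      have h1 : ((m:ℝ)+1) ≤ (n:ℝ)+1 := by
        have := (Nat.cast_le (α := ℝ)).2 hmn
        linarith
      exact inv_anti₀ (hcpos m) h1
    have h2 := mySmnn (sub_nonneg.2 hsc) (hA a ha)
    rw [sub_smul] at h2
    exact sub_nonneg.1 h2
  -- x n decreases to 0 thanks to the uo-hypothesis with u = e
  have hglb : IsGLB (Set.range x) 0 := by
    constructor
    · rintro y ⟨n, rfl⟩; exact hx0 n
    · intro b hb
      obtain ⟨κ, _, _, _, u, hu_anti, hu_glb, hu_dom⟩ := huo e he.le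
      refine hu_glb.2 ?_
      rintro y ⟨k, rfl⟩
      obtain ⟨i₀, hi₀⟩ := hu_dom k
      have hx_le : x i₀.1 ≤ u k := by
        refine csSup_le (hSne i₀.1) ?_
        rintro y ⟨a, ha, rfl⟩
        have hle := hi₀ ((i₀.1, ⟨a, ha⟩) : FstOrd ℕ ↥A) (le_refl i₀.1)
        calc ((i₀.1:ℝ)+1)⁻¹ • a ⊓ e
            ≤ |((i₀.1:ℝ)+1)⁻¹ • a| ⊓ e := inf_le_inf_right e (le_abs_self _)
          _ ≤ |(|((i₀.1:ℝ)+1)⁻¹ • a| ⊓ e)| := le_abs_self _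
          _ ≤ u k := hle
      exact le_trans (hb ⟨i₀.1, rfl⟩) hx_le
  -- pieces of e where x n is at most e/2
  set w : ℕ → X := fun n => (e - (2:ℝ) • x n) ⊔ 0 with hwdef
  set z : ℕ → X := fun n => ((2:ℝ) • x n - e) ⊔ 0 with hzdef
  have hw0 : ∀ n, 0 ≤ w n := fun n => le_sup_right
  have hz0 : ∀ n, 0 ≤ z n := fun n => le_sup_right
  have hwz : ∀ n, w n ⊓ z n = 0 := by
    intro n
    have := myPosNeg (e - (2:ℝ) • x n)
    rwa [neg_sub] at this
  have hwmono : ∀ {m n : ℕ}, m ≤ n → w m ≤ w n := by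
    intro m n hmn
    exact sup_le_sup_right (sub_le_sub_left (mySm (by norm_num) (hanti hmn)) e) 0
  set T : ℕ → Set X := fun n => Set.range (fun m : ℕ => (m:ℝ) • w n ⊓ e) with hTdef
  set P : ℕ → X := fun n => sSup (T n) with hPdef
  have hTb : ∀ n, BddAbove (T n) := fun n => ⟨e, by rintro y ⟨m, rfl⟩; exact inf_le_right⟩
  have hTne : ∀ n, (T n).Nonempty := fun n => ⟨_, ⟨0, rfl⟩⟩
  have hPmem : ∀ n (m : ℕ), (m:ℝ) • w n ⊓ e ≤ P n := fun n m => le_csSup (hTb n) ⟨m, rfl⟩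
  have hPle : ∀ n, P n ≤ e := fun n =>
    csSup_le (hTne n) (by rintro y ⟨m, rfl⟩; exact inf_le_right)
  have hP0 : ∀ n, 0 ≤ P n := by
    intro n
    refine le_trans ?_ (hPmem n 0)
    rw [Nat.cast_zero, zero_smul]
    exact le_inf le_rfl he.le
  have hPlub : ∀ n, IsLUB (T n) (P n) := fun n => isLUB_csSup (hTne n) (hTb n)
  have hPmono : ∀ {m n : ℕ}, m ≤ n → P m ≤ P n := by
    intro m n hmn
    refine csSup_le (hTne m) ?_
    rintro y ⟨k, rfl⟩
    exact le_trans (inf_le_inf_right e (mySm (Nat.cast_nonneg k) (hwmono hmn))) (hPmem n k)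
  -- e - P n is disjoint from w n
  have hePw : ∀ n, (e - P n) ⊓ w n = 0 := by
    intro n
    set g := (e - P n) ⊓ w n with hgdef
    have hg0 : 0 ≤ g := le_inf (sub_nonneg.2 (hPle n)) (hw0 n)
    have hgw : g ≤ w n := inf_le_right
    have hgP : g ≤ e - P n := inf_le_left
    have hind : ∀ m : ℕ, (m:ℝ) • g ≤ e := by
      intro m
      induction m with
      | zero => rw [Nat.cast_zero, zero_smul]; exact he.le
      | succ k ih =>
        have h1 : (k:ℝ) • g ≤ (k:ℝ) • w n ⊓ e := le_inf (mySm (Nat.cast_nonneg k) hgw) ih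
        have h2 : (k:ℝ) • g ≤ P n := h1.trans (hPmem n k)
        have h3 : ((k+1:ℕ):ℝ) • g = (k:ℝ) • g + g := by
          push_cast; rw [add_smul, one_smul]
        rw [h3]
        calc (k:ℝ) • g + g ≤ P n + (e - P n) := add_le_add h2 hgP
          _ = e := by abel
    exact le_antisymm (myArch hg0 hind) hg0
  have hwe : ∀ n, w n ⊓ (e - P n) = 0 := by
    intro n; rw [inf_comm]; exact hePw n
  -- z n is disjoint from P n
  have hzP : ∀ n, z n ⊓ P n = 0 := by
    intro n
    apply le_antisymm
    · refine myLubInf (hPlub n) (z n) 0 ?_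
      rintro y ⟨m, rfl⟩
      calc z n ⊓ ((m:ℝ) • w n ⊓ e) ≤ (m:ℝ) • w n ⊓ z n :=
            le_inf (inf_le_right.trans inf_le_left) inf_le_left
        _ = 0 := myScaleDisj (hw0 n) (hz0 n) (hwz n) (Nat.cast_nonneg m)
    · exact le_inf (hz0 n) (hP0 n)
  -- P n is a component of e
  have hPcomp : ∀ n, P n ⊓ (e - P n) = 0 := by
    intro n
    apply le_antisymm
    · rw [inf_comm]
      refine myLubInf (hPlub n) (e - P n) 0 ?_
      rintro y ⟨m, rfl⟩
      calc (e - P n) ⊓ ((m:ℝ) • w n ⊓ e) ≤ (m:ℝ) • w n ⊓ (e - P n) :=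
            le_inf (inf_le_right.trans inf_le_left) inf_le_left
        _ = 0 := myScaleDisj (hw0 n) (sub_nonneg.2 (hPle n)) (hwe n) (Nat.cast_nonneg m)
    · exact le_inf (hP0 n) (sub_nonneg.2 (hPle n))
  -- sup of the P n is e
  have hbddP : BddAbove (Set.range P) := ⟨e, by rintro y ⟨n, rfl⟩; exact hPle n⟩
  have hsupP : IsLUB (Set.range P) e := by
    have hlub : IsLUB (Set.range P) (sSup (Set.range P)) :=
      isLUB_csSup ⟨P 0, ⟨0, rfl⟩⟩ hbddP
    set cS := sSup (Set.range P) with hcSdef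
    have hcse : cS ≤ e := csSup_le ⟨P 0, ⟨0, rfl⟩⟩ (by rintro y ⟨n, rfl⟩; exact hPle n)
    set r := e - cS with hrdef
    have hr0 : 0 ≤ r := sub_nonneg.2 hcse
    have hrPn : ∀ n, r ≤ e - P n := fun n => sub_le_sub_left (le_csSup hbddP ⟨n, rfl⟩) e
    have hrw : ∀ n, r ⊓ w n = 0 := by
      intro n
      apply le_antisymm
      · calc r ⊓ w n ≤ (e - P n) ⊓ w n := inf_le_inf_right (w n) (hrPn n)
          _ = 0 := hePw n
      · exact le_inf hr0 (hw0 n)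
    have hr2x : ∀ n, r ≤ (2:ℝ) • x n := by
      intro n
      have hre : r ≤ e := by
        have : 0 ≤ cS := le_trans (hP0 0) (le_csSup hbddP ⟨0, rfl⟩)
        rw [hrdef]
        calc e - cS ≤ e - 0 := sub_le_sub_left this e
          _ = e := sub_zero e
      have h1 : r ≤ w n + (2:ℝ) • x n := by
        refine hre.trans ?_
        have h2 : e - (2:ℝ) • x n ≤ w n := le_sup_left
        calc e = (e - (2:ℝ) • x n) + (2:ℝ) • x n := by abel
          _ ≤ w n + (2:ℝ) • x n := add_le_add_left h2 _
      calc r = r ⊓ (w n + (2:ℝ) • x n) := (inf_eq_left.2 h1).symm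
        _ ≤ r ⊓ w n + r ⊓ ((2:ℝ) • x n) :=
            myInfAdd hr0 (hw0 n) (mySmnn (by norm_num) (hx0 n))
        _ = r ⊓ ((2:ℝ) • x n) := by rw [hrw n, zero_add]
        _ ≤ (2:ℝ) • x n := inf_le_right
    have hhalf : ∀ n, (2:ℝ)⁻¹ • r ≤ x n := by
      intro n
      have := mySm (by norm_num : (0:ℝ) ≤ 2⁻¹) (hr2x n)
      rwa [inv_smul_smul₀ (by norm_num : (2:ℝ) ≠ 0)] at this
    have hrle : (2:ℝ)⁻¹ • r ≤ 0 := hglb.2 (by rintro y ⟨n, rfl⟩; exact hhalf n)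
    have hrz : r ≤ 0 := by
      have := mySm (by norm_num : (0:ℝ) ≤ 2) hrle
      rwa [smul_inv_smul₀ (by norm_num : (2:ℝ) ≠ 0), smul_zero] at this
    have : cS = e := le_antisymm hcse (by rw [← sub_nonpos]; exact hrz)
    rwa [this] at hlub
  -- disjoint pieces d n
  set Pm : ℕ → X := fun n => Nat.rec (motive := fun _ => X) 0 (fun k _ => P k) n with hPmdef
  set d : ℕ → X := fun n => P n - Pm n with hddef
  have hPm_le : ∀ n, Pm n ≤ P n := by
    intro n
    cases n with
    | zero => exact hP0 0
    | succ k => exact hPmono (Nat.le_succ k)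
  have hPm0 : ∀ n, 0 ≤ Pm n := by
    intro n
    cases n with
    | zero => exact le_rfl
    | succ k => exact hP0 k
  have hPm_le_e : ∀ n, Pm n ≤ e := fun n => (hPm_le n).trans (hPle n)
  have hPm_comp : ∀ n, Pm n ⊓ (e - Pm n) = 0 := by
    intro n
    cases n with
    | zero =>
      show (0:X) ⊓ (e - 0) = 0
      rw [sub_zero]
      exact inf_eq_left.2 he.le
    | succ k => exact hPcomp k
  have hd0 : ∀ n, 0 ≤ d n := fun n => sub_nonneg.2 (hPm_le n)
  have hdP : ∀ n, d n ≤ P n := fun n => sub_le_self _ (hPm0 n)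
  have hde : ∀ n, d n ≤ e := fun n => (hdP n).trans (hPle n)
  have hdePm : ∀ n, d n ≤ e - Pm n := fun n => sub_le_sub_right (hPle n) _
  have hdcomp : ∀ n, d n ⊓ (e - d n) = 0 := by
    intro n
    apply le_antisymm
    · have hsplit : e - d n = (e - P n) + Pm n := by
        show e - (P n - Pm n) = (e - P n) + Pm n
        rw [sub_sub_eq_add_sub, sub_add_eq_add_sub]
      calc d n ⊓ (e - d n) = d n ⊓ ((e - P n) + Pm n) := by rw [hsplit]
        _ ≤ d n ⊓ (e - P n) + d n ⊓ Pm n :=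
            myInfAdd (hd0 n) (sub_nonneg.2 (hPle n)) (hPm0 n)
        _ ≤ P n ⊓ (e - P n) + (e - Pm n) ⊓ Pm n :=
            add_le_add (inf_le_inf_right _ (hdP n)) (inf_le_inf_right _ (hdePm n))
        _ = 0 := by rw [hPcomp n, inf_comm (e - Pm n) (Pm n), hPm_comp n, add_zero]
    · exact le_inf (hd0 n) (sub_nonneg.2 (hde n))
  have hddisj : ∀ m n, m < n → d m ⊓ d n = 0 := by
    intro m n hmn
    apply le_antisymm
    · obtain ⟨k, rfl⟩ : ∃ k, n = k + 1 := ⟨n - 1, by omega⟩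
      have h1 : d m ≤ Pm (k+1) := by
        show d m ≤ P k
        exact (hdP m).trans (hPmono (by omega))
      calc d m ⊓ d (k+1) ≤ Pm (k+1) ⊓ (e - Pm (k+1)) := inf_le_inf h1 (hdePm (k+1))
        _ = 0 := hPm_comp (k+1)
    · exact le_inf (hd0 m) (hd0 n)
  have hzd : ∀ n, z n ⊓ d n = 0 := fun n =>
    le_antisymm (le_trans (inf_le_inf_left _ (hdP n)) (hzP n).le) (le_inf (hz0 n) (hd0 n))
  -- the key estimate
  have hkey : ∀ a ∈ A, ∀ n : ℕ, ((a - ((n:ℝ)+1) • e) ⊔ 0) ⊓ d n = 0 := by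
    intro a ha n
    set c : ℝ := (n:ℝ)+1 with hcdef
    have h1 : a ⊓ c • e ≤ c • x n := by
      have h0 := mySm (hcpos n).le (hmem n a ha)
      rwa [mySmulInf (hcpos n), smul_inv_smul₀ (hcpos n).ne'] at h0
    have h2 : (2:ℝ) • x n ≤ e + z n := by
      have h2a : (2:ℝ) • x n - e ≤ z n := le_sup_left
      calc (2:ℝ) • x n = e + ((2:ℝ) • x n - e) := by abel
        _ ≤ e + z n := add_le_add_right h2a e
    have h3 : (2:ℝ) • a ⊓ (2:ℝ) • (c • e) ≤ c • e + c • z n := by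
      calc (2:ℝ) • a ⊓ (2:ℝ) • (c • e) = (2:ℝ) • (a ⊓ c • e) := (mySmulInf two_pos a _).symm
        _ ≤ (2:ℝ) • (c • x n) := mySm (by norm_num) h1
        _ = c • ((2:ℝ) • x n) := smul_comm 2 c (x n)
        _ ≤ c • (e + z n) := mySm (hcpos n).le h2
        _ = c • e + c • z n := smul_add c e (z n)
    have h5 : ((2:ℝ) • a ⊓ (2:ℝ) • (c • e)) - c • e ≤ c • z n := by
      rw [sub_le_iff_le_add, add_comm]; exact h3
    have h6 : ((2:ℝ) • a ⊓ (2:ℝ) • (c • e)) - c • e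
        = ((2:ℝ) • a - c • e) ⊓ ((2:ℝ) • (c • e) - c • e) := by
      rw [sub_eq_add_neg, inf_add, ← sub_eq_add_neg, ← sub_eq_add_neg]
    have h7 : (2:ℝ) • (c • e) - c • e = c • e := by rw [two_smul]; abel
    have h8 : (((2:ℝ) • a - c • e) ⊔ 0) ⊓ (c • e) ≤ c • z n := by
      have h9 : (((2:ℝ) • a - c • e) ⊓ (c • e)) ⊔ 0 ≤ c • z n := by
        refine sup_le ?_ (mySmnn (hcpos n).le (hz0 n))
        have h6' : ((2:ℝ) • a - c • e) ⊓ (c • e) = ((2:ℝ) • a ⊓ (2:ℝ) • (c • e)) - c • e := by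
          rw [h6, h7]
        rw [h6']; exact h5
      have h10 : (((2:ℝ) • a - c • e) ⊓ (c • e)) ⊔ 0
          = (((2:ℝ) • a - c • e) ⊔ 0) ⊓ ((c • e) ⊔ 0) := sup_inf_right _ _ _
      have h11 : (c • e) ⊔ 0 = c • e := sup_eq_left.2 (mySmnn (hcpos n).le he.le)
      rw [h10, h11] at h9; exact h9
    have h12 : (a - c • e) ⊔ 0 ≤ ((2:ℝ) • a - c • e) ⊔ 0 := by
      refine sup_le_sup_right (sub_le_sub_right ?_ _) 0
      rw [two_smul]
      exact le_add_of_nonneg_left (hA a ha)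
    apply le_antisymm
    · calc ((a - c • e) ⊔ 0) ⊓ d n
          ≤ ((((2:ℝ) • a - c • e) ⊔ 0) ⊓ (c • e)) ⊓ d n := by
            refine le_inf (le_inf ?_ ?_) inf_le_right
            · exact inf_le_left.trans h12
            · exact inf_le_right.trans ((hde n).trans (myLeSmul (hc1 n) he.le))
        _ ≤ (c • z n) ⊓ d n := inf_le_inf_right _ h8
        _ = 0 := myScaleDisj (hz0 n) (hd0 n) (hzd n) (hcpos n).le
    · exact le_inf le_sup_right (hd0 n)
  -- the disjoint family and its supremum
  set D : Set X := Set.range (fun n : ℕ => ((n:ℝ)+1) • d n) with hDdef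
  have hDpos : ∀ y ∈ D, 0 ≤ y := by
    rintro y ⟨n, rfl⟩; exact mySmnn (hcpos n).le (hd0 n)
  have hDdisj : ∀ y₁ ∈ D, ∀ y₂ ∈ D, y₁ ≠ y₂ → y₁ ⊓ y₂ = 0 := by
    rintro y₁ ⟨n, rfl⟩ y₂ ⟨m, rfl⟩ hne
    have hnm : n ≠ m := by rintro rfl; exact hne rfl
    have hdnm : d n ⊓ d m = 0 := by
      rcases lt_or_gt_of_ne hnm with h | h
      · exact hddisj n m h
      · rw [inf_comm]; exact hddisj m n h
    set K : ℝ := max ((n:ℝ)+1) ((m:ℝ)+1) with hKdef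
    have hK0 : (0:ℝ) < K := lt_of_lt_of_le (hcpos n) (le_max_left _ _)
    apply le_antisymm
    · calc ((n:ℝ)+1) • d n ⊓ ((m:ℝ)+1) • d m ≤ K • d n ⊓ K • d m :=
          inf_le_inf (myScaleLe (le_max_left _ _) (hd0 n)) (myScaleLe (le_max_right _ _) (hd0 m))
        _ = K • (d n ⊓ d m) := (mySmulInf hK0 _ _).symm
        _ = 0 := by rw [hdnm, smul_zero]
    · exact le_inf (mySmnn (hcpos n).le (hd0 n)) (mySmnn (hcpos m).le (hd0 m))
  obtain ⟨h₀, hh₀⟩ := hdisj D hDpos hDdisj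
  have hh0mem : ∀ n : ℕ, ((n:ℝ)+1) • d n ≤ h₀ := fun n => hh₀.1 ⟨n, rfl⟩
  have hh0nn : 0 ≤ h₀ := le_trans (mySmnn (hcpos 0).le (hd0 0)) (hh0mem 0)
  refine ⟨h₀, hh0nn, ?_⟩
  intro a ha
  set v : X := (a - h₀) ⊔ 0 with hvdef
  have hv0 : 0 ≤ v := le_sup_right
  have hvd : ∀ n, v ⊓ d n = 0 := by
    intro n
    set c : ℝ := (n:ℝ)+1 with hcdef
    have hv1 : v ≤ (a - c • d n) ⊔ 0 :=
      sup_le_sup_right (sub_le_sub_left (hh0mem n) a) 0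
    have hsplit : a - c • d n = (a - c • e) + c • (e - d n) := by
      conv_rhs => rw [smul_sub]
      exact (sub_add_sub_cancel a (c • e) (c • d n)).symm
    have hv2 : (a - c • d n) ⊔ 0 ≤ ((a - c • e) ⊔ 0) + c • (e - d n) := by
      refine sup_le ?_ (add_nonneg le_sup_right (mySmnn (hcpos n).le (sub_nonneg.2 (hde n))))
      rw [hsplit]
      exact add_le_add_left le_sup_left _
    have hed : (e - d n) ⊓ d n = 0 := by rw [inf_comm]; exact hdcomp n
    apply le_antisymm
    · calc v ⊓ d n ≤ (((a - c • e) ⊔ 0) + c • (e - d n)) ⊓ d n :=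
          inf_le_inf_right _ (hv1.trans hv2)
        _ = d n ⊓ (((a - c • e) ⊔ 0) + c • (e - d n)) := inf_comm _ _
        _ ≤ d n ⊓ ((a - c • e) ⊔ 0) + d n ⊓ (c • (e - d n)) :=
            myInfAdd (hd0 n) le_sup_right (mySmnn (hcpos n).le (sub_nonneg.2 (hde n)))
        _ = ((a - c • e) ⊔ 0) ⊓ d n + (c • (e - d n)) ⊓ d n := by
            rw [inf_comm (d n) _, inf_comm (d n) _]
        _ = (c • (e - d n)) ⊓ d n := by rw [hkey a ha n, zero_add]
        _ = 0 := myScaleDisj (sub_nonneg.2 (hde n)) (hd0 n) hed (hcpos n).le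
    · exact le_inf hv0 (hd0 n)
  have hvP : ∀ n, v ⊓ P n = 0 := by
    intro n
    induction n with
    | zero =>
      have hP0d : P 0 = d 0 := by show P 0 = P 0 - Pm 0; show P 0 = P 0 - 0; rw [sub_zero]
      rw [hP0d]; exact hvd 0
    | succ k ih =>
      have hsplit : P (k+1) = P k + d (k+1) := by
        show P (k+1) = P k + (P (k+1) - Pm (k+1))
        show P (k+1) = P k + (P (k+1) - P k)
        abel
      apply le_antisymm
      · calc v ⊓ P (k+1) = v ⊓ (P k + d (k+1)) := by rw [← hsplit]
          _ ≤ v ⊓ P k + v ⊓ d (k+1) := myInfAdd hv0 (hP0 k) (hd0 (k+1))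
          _ = 0 := by rw [ih, hvd (k+1), add_zero]
      · exact le_inf hv0 (hP0 (k+1))
  have hve : v ⊓ e = 0 := by
    apply le_antisymm
    · exact myLubInf hsupP v 0 (by rintro y ⟨n, rfl⟩; exact (hvP n).le)
    · exact le_inf hv0 he.le
  have hvz : v = 0 := hweak v hv0 hve
  have : a - h₀ ≤ 0 := le_sup_left.trans hvz.le
  exact sub_nonpos.1 this
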